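/- Let x₁,…,xₙ, y₁,…,yₙ be vectors in an inner product space. Then ∑_{i,j=1}^n ‖xᵢ−xⱼ‖² + ∑_{i,j=1}^n ‖yᵢ−yⱼ‖² = 2∑_{i,j=1}^n ‖xᵢ−yⱼ‖² − 2‖∑_{i=1}^n (xᵢ−yᵢ)‖². -/

import Mathlib

open Finset RCLike

lemma aux_double_sum {𝕜 E : Type*} [RCLike 𝕜] [NormedAddCommGroup E] [InnerProductSpace 𝕜 E]
    {n : ℕ} (u v : Fin n → E) :
    (∑ i, ∑ j, ‖u i - v j‖ ^ 2)
      = (n : ℝ) * (∑ i, ‖u i‖ ^ 2) + (n : ℝ) * (∑ j, ‖v j‖ ^ 2)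
        - 2 * re ((inner 𝕜 (∑ i, u i) (∑ j, v j) : 𝕜)) := by
  have h : ∀ a b : E, ‖a - b‖ ^ 2 = ‖a‖ ^ 2 - 2 * re (inner 𝕜 a b : 𝕜) + ‖b‖ ^ 2 :=
    fun a b => norm_sub_sq a b
  simp_rw [h, Finset.sum_add_distrib, Finset.sum_sub_distrib, Finset.sum_const,
    Finset.card_univ, Fintype.card_fin, ← Finset.mul_sum, sum_inner, inner_sum, map_sum,
    nsmul_eq_mul, Finset.mul_sum]
  ring

theorem vector_parallelogram_identity
    {𝕜 E : Type*} [RCLike 𝕜] [NormedAddCommGroup E] [InnerProductSpace 𝕜 E]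
    {n : ℕ} (x y : Fin n → E) :
    (∑ i, ∑ j, ‖x i - x j‖ ^ 2) + (∑ i, ∑ j, ‖y i - y j‖ ^ 2)
      = 2 * (∑ i, ∑ j, ‖x i - y j‖ ^ 2) - 2 * ‖∑ i, (x i - y i)‖ ^ 2 := by
  rw [aux_double_sum (𝕜 := 𝕜) x x, aux_double_sum (𝕜 := 𝕜) y y,
    aux_double_sum (𝕜 := 𝕜) x y, Finset.sum_sub_distrib,
    norm_sub_sq (𝕜 := 𝕜)]
  simp only [inner_self_eq_norm_sq]
  ring
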